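/- For Re s > 1, Re a > 0, and real k with 0 < k < 2 (k ≠ 1 allowed), the Hurwitz zeta function satisfies ζ(s, ka) = ∑_{n=0}^∞ C(s+n-1, n)·(1-k)^n·a^n·ζ(s+n, a), where C(s+n-1,n) = (s)_n/n! is the generalized binomial coefficient. -/

import Mathlib

open Complex Filter

noncomputable def bc (s : ℂ) (n : ℕ) : ℂ := (ascPochhammer ℂ n).eval s / n.factorial

lemma bc_zero (s : ℂ) : bc s 0 = 1 := by simp [bc]

lemma bc_one (s : ℂ) : bc s 1 = s := by simp [bc, ascPochhammer_one]

lemma bc_succ (s : ℂ) (n : ℕ) : bc s (n+1) * (n+1) = bc s n * (s + n) := by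
  have h : ((n:ℂ) + 1) ≠ 0 := Nat.cast_add_one_ne_zero n
  have hf : ((n.factorial : ℂ)) ≠ 0 := by exact_mod_cast Nat.cast_ne_zero.2 n.factorial_ne_zero
  simp only [bc, ascPochhammer_succ_right, Polynomial.eval_mul, Polynomial.eval_add, Polynomial.eval_X, Polynomial.eval_natCast, Nat.factorial_succ]
  field_simp [bc, ascPochhammer_succ_right, Nat.factorial_succ]
  push_cast
  ring

lemma bc_norm_succ (s : ℂ) (n : ℕ) :
    ‖bc s (n+1)‖ * (n+1) ≤ ‖bc s n‖ * (‖s‖ + n) := by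
  have h2 : ‖bc s (n+1)‖ * (n+1) = ‖bc s n‖ * ‖s + (n:ℂ)‖ := by
    calc ‖bc s (n+1)‖ * (n+1) = ‖bc s (n+1) * ((n:ℂ)+1)‖ := by
          rw [norm_mul]
          congr 1
          rw [show ((n:ℂ)+1) = ((n+1 : ℕ) : ℂ) by push_cast; ring, Complex.norm_natCast]
          push_cast; ring
      _ = ‖bc s n * (s + n)‖ := by rw [bc_succ]
      _ = ‖bc s n‖ * ‖s + (n:ℂ)‖ := norm_mul _ _
  rw [h2]
  gcongr
  calc ‖s + (n:ℂ)‖ ≤ ‖s‖ + ‖(n:ℂ)‖ := norm_add_le _ _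
    _ = ‖s‖ + n := by rw [Complex.norm_natCast]

lemma bc_summable (s : ℂ) {x : ℝ} (hx : 0 ≤ x) (h1 : x < 1) :
    Summable (fun n : ℕ => ‖bc s n‖ * x ^ n) := by
  rcases eq_or_lt_of_le hx with h | hxpos
  · apply summable_of_ne_finset_zero (s := {0})
    intro n hn
    simp only [Finset.mem_singleton] at hn
    simp [← h, zero_pow hn]
  set r : ℝ := (x + 1) / 2 with hr
  have hr1 : r < 1 := by rw [hr]; linarith
  have hxr : x < r := by rw [hr]; linarith
  apply summable_of_ratio_norm_eventually_le hr1
  have hten : Tendsto (fun n : ℕ => (‖s‖ + n) / (n + 1) * x) atTop (nhds (1 * x)) := by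
    apply Tendsto.mul_const
    have : (fun n : ℕ => (‖s‖ + n) / (n + 1)) = fun n : ℕ => (‖s‖ - 1) / (n + 1) + 1 := by
      funext n
      have : ((n:ℝ) + 1) ≠ 0 := by positivity
      field_simp
      ring
    rw [this]
    have h0 : Tendsto (fun n : ℕ => (‖s‖ - 1) / (n + 1)) atTop (nhds 0) := by
      apply Tendsto.div_atTop tendsto_const_nhds
      exact Filter.tendsto_atTop_add_const_right _ _ tendsto_natCast_atTop_atTop
    simpa using h0.add tendsto_const_nhds
  rw [one_mul] at hten
  have hev : ∀ᶠ n : ℕ in atTop, (‖s‖ + n) / (n + 1) * x ≤ r :=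
    Filter.Tendsto.eventually_le_const hxr hten
  filter_upwards [hev] with n hn
  have hpos : (0:ℝ) < n + 1 := by positivity
  have h2 := bc_norm_succ s n
  have key : ‖bc s (n+1)‖ ≤ ‖bc s n‖ * ((‖s‖ + n) / (n+1)) := by
    rw [mul_div_assoc', le_div_iff₀ hpos]
    exact h2
  have hxn : (0:ℝ) ≤ x ^ n := by positivity
  calc ‖‖bc s (n+1)‖ * x ^ (n+1)‖ = ‖bc s (n+1)‖ * x ^ (n+1) := by
        rw [Real.norm_of_nonneg (by positivity)]
    _ ≤ ‖bc s n‖ * ((‖s‖ + n) / (n+1)) * x ^ (n+1) := by gcongr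
    _ = ((‖s‖ + n) / (n+1) * x) * (‖bc s n‖ * x ^ n) := by ring
    _ ≤ r * (‖bc s n‖ * x ^ n) := by
        apply mul_le_mul_of_nonneg_right hn (by positivity)
    _ = r * ‖‖bc s n‖ * x ^ n‖ := by rw [Real.norm_of_nonneg (by positivity)]

noncomputable def bp (s : ℂ) : FormalMultilinearSeries ℂ ℂ ℂ :=
  FormalMultilinearSeries.ofScalars ℂ (bc s)

lemma bp_radius (s : ℂ) : 1 ≤ (bp s).radius := by
  apply ENNReal.le_of_forall_nnreal_lt
  intro r hr
  apply FormalMultilinearSeries.le_radius_of_summable_norm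
  have : ∀ n, ‖bp s n‖ * (r:ℝ) ^ n = ‖bc s n‖ * (r:ℝ) ^ n := by
    intro n
    rw [bp, FormalMultilinearSeries.ofScalars_norm]
  rw [funext this]
  exact bc_summable s r.coe_nonneg (by exact_mod_cast hr)

noncomputable def bf (s : ℂ) : ℂ → ℂ := (bp s).sum

lemma bf_hasFPower (s : ℂ) : HasFPowerSeriesOnBall (bf s) (bp s) 0 1 :=
  ((bp s).hasFPowerSeriesOnBall (lt_of_lt_of_le one_pos (bp_radius s))).mono one_pos (bp_radius s)

lemma mem_ball_of_norm {y : ℂ} (hy : ‖y‖ < 1) : y ∈ Metric.eball (0:ℂ) 1 := by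
  rw [EMetric.mem_ball, edist_zero_right]
  rw [enorm_eq_nnnorm]
  exact_mod_cast (by exact_mod_cast hy : (‖y‖₊ : ℝ) < 1)

lemma bf_hasSum (s : ℂ) {y : ℂ} (hy : ‖y‖ < 1) :
    HasSum (fun n => bc s n * y ^ n) (bf s y) := by
  have h := (bf_hasFPower s).hasSum (mem_ball_of_norm hy)
  rw [zero_add] at h
  have e : ∀ n, (bp s n fun _ => y) = bc s n * y ^ n := by
    intro n
    rw [bp, FormalMultilinearSeries.ofScalars_apply_eq, smul_eq_mul]
  rwa [funext e] at h

lemma bf_deriv_hasSum (s : ℂ) {y : ℂ} (hy : ‖y‖ < 1) :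
    HasSum (fun n : ℕ => ((n:ℂ)+1) * bc s (n+1) * y ^ (n+1)) (y * deriv (bf s) y) := by
  have h := ((bf_hasFPower s).fderiv).hasSum (mem_ball_of_norm hy)
  rw [zero_add] at h
  have h2 := h.mapL (ContinuousLinearMap.apply ℂ ℂ y)
  simp only [ContinuousLinearMap.apply_apply] at h2
  have e1 : ∀ n, ((bp s).derivSeries n fun _ => y) y = ((n:ℂ)+1) * bc s (n+1) * y ^ (n+1) := by
    intro n
    rw [FormalMultilinearSeries.derivSeries_apply_diag]
    rw [bp, FormalMultilinearSeries.ofScalars_apply_eq, nsmul_eq_mul, smul_eq_mul]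
    push_cast
    ring
  have e2 : (fderiv ℂ (bf s) y) y = y * deriv (bf s) y := by
    have : (fderiv ℂ (bf s) y) y = (fderiv ℂ (bf s) y) (y • 1) := by rw [smul_eq_mul, mul_one]
    rw [this, ContinuousLinearMap.map_smul, smul_eq_mul, deriv]
  rw [funext e1, e2] at h2
  exact h2

lemma bf_zero (s : ℂ) : bf s 0 = 1 := by
  have h := bf_hasSum s (y := 0) (by norm_num)
  have h2 : HasSum (fun n : ℕ => bc s n * (0:ℂ) ^ n) 1 := by
    have := hasSum_single (f := fun n : ℕ => bc s n * (0:ℂ) ^ n) 0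
      (fun b hb => by simp [zero_pow hb])
    simpa [bc_zero] using this
  exact h.unique h2

lemma bf_ode (s : ℂ) {y : ℂ} (hy : ‖y‖ < 1) :
    (1 - y) * deriv (bf s) y = s * bf s y := by
  rcases eq_or_ne y 0 with rfl | hy0
  · have hd : deriv (bf s) 0 = (bp s) 1 fun _ => 1 :=
      (bf_hasFPower s).hasFPowerSeriesAt.deriv
    rw [bf_zero, hd, bp, FormalMultilinearSeries.ofScalars_apply_eq, bc_one]
    simp
  · have A := bf_deriv_hasSum s hy
    have A' : HasSum (fun n : ℕ => bc s n * (s + n) * y ^ (n+1)) (y * deriv (bf s) y) := by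
      refine A.congr_fun fun n => ?_
      rw [← bc_succ]
      ring
    have B := (bf_hasSum s hy).mul_left (s * y)
    have C : HasSum (fun n : ℕ => (n:ℂ) * bc s n * y ^ (n+1))
        (y * deriv (bf s) y - s * y * bf s y) := by
      refine (A'.sub B).congr_fun fun n => ?_
      ring
    have D : HasSum (fun n : ℕ => ((n+1:ℕ):ℂ) * bc s (n+1) * y ^ ((n+1)+1)) 
        (y * (y * deriv (bf s) y)) := by
      refine (A.mul_left y).congr_fun fun n => ?_
      push_cast
      ring
    have E : HasSum (fun n : ℕ => (n:ℂ) * bc s n * y ^ (n+1))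
        (y * (y * deriv (bf s) y)) := by
      have h5 := (hasSum_nat_add_iff (f := fun n : ℕ => (n:ℂ) * bc s n * y ^ (n+1)) 1).mp D
      simpa using h5
    have heq : y * deriv (bf s) y - s * y * bf s y = y * (y * deriv (bf s) y) := C.unique E
    have : y * ((1 - y) * deriv (bf s) y - s * bf s y) = 0 := by linear_combination heq
    rcases mul_eq_zero.mp this with h | h
    · exact absurd h hy0
    · linear_combination h

lemma one_sub_slitPlane {z : ℂ} (hz : ‖z‖ < 1) : (1 - z) ∈ Complex.slitPlane := by
  apply Or.inl
  have : z.re ≤ ‖z‖ := Complex.re_le_norm z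
  simp only [Complex.sub_re, Complex.one_re]
  linarith

lemma one_sub_ne_zero {z : ℂ} (hz : ‖z‖ < 1) : (1 : ℂ) - z ≠ 0 :=
  Complex.slitPlane_ne_zero (one_sub_slitPlane hz)

lemma bf_eq_cpow (s : ℂ) {y : ℂ} (hy : ‖y‖ < 1) : bf s y = (1 - y) ^ (-s) := by
  set G : ℂ → ℂ := fun z => bf s z * Complex.exp (s * Complex.log (1 - z)) with hG
  have hball : ∀ z ∈ Metric.ball (0:ℂ) 1, HasDerivAt G 0 z := by
    intro z hz
    rw [Metric.mem_ball, dist_zero_right] at hz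
    have hdiff : DifferentiableAt ℂ (bf s) z := by
      have := (bf_hasFPower s).analyticOnNhd z (mem_ball_of_norm hz)
      exact this.differentiableAt
    have hf : HasDerivAt (bf s) (deriv (bf s) z) z := hdiff.hasDerivAt
    have h1 : HasDerivAt (fun z : ℂ => 1 - z) (-1) z := (hasDerivAt_id z).const_sub 1
    have h2 : HasDerivAt (fun z : ℂ => Complex.log (1 - z)) ((-1) / (1 - z)) z :=
      h1.clog (one_sub_slitPlane hz)
    have h3 : HasDerivAt (fun z : ℂ => s * Complex.log (1 - z)) (s * ((-1) / (1 - z))) z :=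
      h2.const_mul s
    have h4 : HasDerivAt (fun z : ℂ => Complex.exp (s * Complex.log (1 - z)))
        (Complex.exp (s * Complex.log (1 - z)) * (s * ((-1) / (1 - z)))) z := h3.cexp
    have h5 : HasDerivAt G _ z := hf.mul h4
    have hode := bf_ode s hz
    have hne := one_sub_ne_zero hz
    convert h5 using 1
    set E := Complex.exp (s * Complex.log (1 - z))
    have hrw : deriv (bf s) z * E + bf s z * (E * (s * (-1 / (1 - z))))
        = deriv (bf s) z * E - E * ((s * bf s z) * (1 - z)⁻¹) := by ring
    rw [hrw, ← hode, mul_comm (1-z) (deriv (bf s) z), mul_assoc, mul_inv_cancel₀ hne, mul_one]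
    ring
  have hconst : G y = G 0 := by
    apply (convex_ball (0:ℂ) 1).is_const_of_fderivWithin_eq_zero (𝕜 := ℂ)
      (fun z hz => ((hball z hz).differentiableAt).differentiableWithinAt)
      (fun z hz => ?_) (by simpa [Metric.mem_ball] using hy) (by simp)
    rw [fderivWithin_of_isOpen Metric.isOpen_ball hz, (hball z hz).hasFDerivAt.fderiv]
    ext w
    simp
  have hG0 : G 0 = 1 := by
    simp [hG, bf_zero, Complex.log_one]
  have key : bf s y * Complex.exp (s * Complex.log (1 - y)) = 1 := by
    simpa [hG] using hconst.trans hG0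
  have : bf s y = (Complex.exp (s * Complex.log (1 - y)))⁻¹ :=
    eq_inv_of_mul_eq_one_left (by linear_combination key)
  rw [this, ← Complex.exp_neg, Complex.cpow_def_of_ne_zero (one_sub_ne_zero hy)]
  congr 1
  ring

theorem hasSum_binomial (s : ℂ) {y : ℂ} (hy : ‖y‖ < 1) :
    HasSum (fun n : ℕ => bc s n * y ^ n) ((1 - y) ^ (-s)) := by
  have := bf_hasSum s hy
  rwa [bf_eq_cpow s hy] at this

/-! ### Part 2: Hurwitz zeta -/

/-- Hurwitz zeta function for `Re s > 1`, `Re a > 0`. -/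
noncomputable def hurwitzZeta' (s a : ℂ) : ℂ := ∑' n : ℕ, ((n : ℂ) + a) ^ (-s)

lemma re_add_pos (m : ℕ) {a : ℂ} (ha : 0 < a.re) : 0 < ((m:ℂ) + a).re := by
  simp only [Complex.add_re, Complex.natCast_re]
  positivity

lemma hz_add_ne_zero (m : ℕ) {a : ℂ} (ha : 0 < a.re) : ((m:ℂ) + a) ≠ 0 := by
  intro h
  have := re_add_pos m ha
  rw [h] at this
  simp at this

lemma norm_le_norm_add (m : ℕ) {a : ℂ} (ha : 0 < a.re) : ‖a‖ ≤ ‖(m:ℂ) + a‖ := by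
  rw [Complex.norm_def, Complex.norm_def]
  apply Real.sqrt_le_sqrt
  simp only [Complex.normSq_apply, Complex.add_re, Complex.add_im, Complex.natCast_re,
    Complex.natCast_im, zero_add]
  have hm : (0:ℝ) ≤ (m:ℝ) := Nat.cast_nonneg m
  nlinarith

lemma cpow_mul_of_pos_re {x y : ℂ} (hx : 0 < x.re) (hy : 0 < y.re) (t : ℂ) :
    (x * y) ^ t = x ^ t * y ^ t := by
  have hx0 : x ≠ 0 := fun h => by rw [h] at hx; simp at hx
  have hy0 : y ≠ 0 := fun h => by rw [h] at hy; simp at hy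
  have hax : |x.arg| < Real.pi / 2 := by
    rw [abs_lt]
    exact ⟨Complex.neg_pi_div_two_lt_arg_iff.mpr (Or.inl hx),
      Complex.arg_lt_pi_div_two_iff.mpr (Or.inl hx)⟩
  have hay : |y.arg| < Real.pi / 2 := by
    rw [abs_lt]
    exact ⟨Complex.neg_pi_div_two_lt_arg_iff.mpr (Or.inl hy),
      Complex.arg_lt_pi_div_two_iff.mpr (Or.inl hy)⟩
  rw [abs_lt] at hax hay
  have harg : x.arg + y.arg ∈ Set.Ioc (-Real.pi) Real.pi := by
    constructor
    · linarith [hax.1, hay.1]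
    · linarith [hax.2, hay.2]
  rw [Complex.cpow_def_of_ne_zero (mul_ne_zero hx0 hy0), Complex.cpow_def_of_ne_zero hx0,
    Complex.cpow_def_of_ne_zero hy0, ← Complex.exp_add, Complex.log_mul hx0 hy0 harg, add_mul]

lemma norm_cpow_le (m : ℕ) {a : ℂ} (ha : 0 < a.re) (t : ℂ) :
    ‖((m:ℂ) + a) ^ (-t)‖ ≤ Real.exp (Real.pi * |t.im|) * ‖(m:ℂ) + a‖ ^ (-t.re) := by
  have hma := hz_add_ne_zero m ha
  rw [Complex.norm_cpow_of_ne_zero hma]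
  have h1 : ‖(m:ℂ)+a‖ ^ (-t).re = ‖(m:ℂ)+a‖ ^ (-t.re) := by
    rw [Complex.neg_re]
  rw [h1, div_eq_mul_inv, mul_comm]
  apply mul_le_mul_of_nonneg_right _ (Real.rpow_nonneg (norm_nonneg _) _)
  rw [← Real.exp_neg]
  apply Real.exp_le_exp.mpr
  have := Complex.abs_arg_le_pi ((m:ℂ)+a)
  have h2 : |((m:ℂ)+a).arg * (-t).im| ≤ Real.pi * |t.im| := by
    rw [abs_mul, Complex.neg_im, abs_neg]
    apply mul_le_mul_of_nonneg_right this (abs_nonneg _)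
  calc -(((m:ℂ)+a).arg * (-t).im) ≤ |((m:ℂ)+a).arg * (-t).im| := neg_le_abs _
    _ ≤ Real.pi * |t.im| := h2

lemma summable_term {a : ℂ} (ha : 0 < a.re) {t : ℂ} (ht : 1 < t.re) :
    Summable (fun m : ℕ => ((m:ℂ) + a) ^ (-t)) := by
  set C := Real.exp (Real.pi * |t.im|) with hC
  have hCpos : 0 < C := Real.exp_pos _
  apply Summable.of_norm_bounded (g := fun m : ℕ => C * (1 / |(m:ℝ) + a.re| ^ t.re))
  · exact ((Real.summable_one_div_nat_add_rpow a.re t.re).mpr ht).mul_left C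
  · intro m
    have hpos : (0:ℝ) < (m:ℝ) + a.re := by positivity
    calc ‖((m:ℂ)+a) ^ (-t)‖ ≤ C * ‖(m:ℂ)+a‖ ^ (-t.re) := norm_cpow_le m ha t
      _ ≤ C * (1 / |(m:ℝ) + a.re| ^ t.re) := by
          apply mul_le_mul_of_nonneg_left _ hCpos.le
          rw [abs_of_pos hpos, one_div, ← Real.rpow_neg hpos.le]
          apply Real.rpow_le_rpow_of_nonpos hpos _ (by linarith : -t.re ≤ 0)
          calc (m:ℝ) + a.re = ((m:ℂ) + a).re := by
                simp [Complex.add_re, Complex.natCast_re]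
            _ ≤ ‖(m:ℂ) + a‖ := Complex.re_le_norm _

lemma norm_one_sub_k_lt {k : ℝ} (hk0 : 0 < k) (hk2 : k < 2) : ‖(1 : ℂ) - k‖ < 1 := by
  rw [show (1:ℂ) - k = ((1 - k : ℝ) : ℂ) by push_cast; ring, Complex.norm_real,
    Real.norm_eq_abs, abs_lt]
  constructor <;> linarith

lemma hasSum_row (s a : ℂ) (ha : 0 < a.re)
    {k : ℝ} (hk0 : 0 < k) (hk2 : k < 2) (m : ℕ) :
    HasSum (fun n : ℕ => bc s n * (1 - (k:ℂ)) ^ n * a ^ n * ((m:ℂ) + a) ^ (-(s + n)))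
      (((m:ℂ) + k * a) ^ (-s)) := by
  have hma := hz_add_ne_zero m ha
  have hMpos : (0:ℝ) < ‖(m:ℂ) + a‖ := norm_pos_iff.mpr hma
  set w : ℂ := (1 - (k:ℂ)) * a / ((m:ℂ) + a) with hw
  have hwn : ‖w‖ < 1 := by
    rw [hw, norm_div, norm_mul, div_lt_one hMpos]
    calc ‖(1:ℂ) - k‖ * ‖a‖ ≤ ‖(1:ℂ) - k‖ * ‖(m:ℂ) + a‖ := by
          apply mul_le_mul_of_nonneg_left (norm_le_norm_add m ha) (norm_nonneg _)
      _ < 1 * ‖(m:ℂ) + a‖ := by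
          apply mul_lt_mul_of_pos_right (norm_one_sub_k_lt hk0 hk2) hMpos
      _ = ‖(m:ℂ) + a‖ := one_mul _
  have hbin := (hasSum_binomial s hwn).mul_right (((m:ℂ) + a) ^ (-s))
  have hre1w : 0 < (1 - w).re := by
    have h1 : w.re ≤ ‖w‖ := Complex.re_le_norm w
    simp only [Complex.sub_re, Complex.one_re]
    linarith
  have hmul : (1 - w) * ((m:ℂ) + a) = (m:ℂ) + k * a := by
    rw [hw]
    field_simp
    ring
  have hval : (1 - w) ^ (-s) * ((m:ℂ) + a) ^ (-s) = ((m:ℂ) + k * a) ^ (-s) := by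
    rw [← cpow_mul_of_pos_re hre1w (re_add_pos m ha), hmul]
  rw [hval] at hbin
  refine hbin.congr_fun fun n => ?_
  have hpow : ((m:ℂ) + a) ^ (-(s + (n:ℂ))) = ((m:ℂ) + a) ^ (-s) * (((m:ℂ) + a) ^ n)⁻¹ := by
    rw [show -(s + (n:ℂ)) = -s + (-(n:ℂ)) by ring, Complex.cpow_add _ _ hma]
    congr 1
    rw [Complex.cpow_neg, Complex.cpow_natCast]
  rw [hpow, hw, div_pow, mul_pow]
  have hpne : ((m:ℂ) + a) ^ n ≠ 0 := pow_ne_zero n hma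
  field_simp

set_option maxHeartbeats 1000000 in
theorem truesdell_multiplication (s a : ℂ) (hs : 1 < s.re) (ha : 0 < a.re)
    (k : ℝ) (hk0 : 0 < k) (hk2 : k < 2) :
    HasSum (fun n : ℕ => ((ascPochhammer ℂ n).eval s / n.factorial) * (1 - k : ℂ) ^ n *
        a ^ n * hurwitzZeta' (s + n) a)
      (hurwitzZeta' s (k * a)) := by
  set F : ℕ × ℕ → ℂ :=
    fun p => bc s p.1 * (1 - (k:ℂ)) ^ p.1 * a ^ p.1 * ((p.2:ℂ) + a) ^ (-(s + p.1)) with hF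
  set r : ℝ := ‖(1:ℂ) - (k:ℂ)‖ with hr
  have hr1 : r < 1 := norm_one_sub_k_lt hk0 hk2
  set C : ℝ := Real.exp (Real.pi * |s.im|) with hC
  have hCpos : 0 < C := Real.exp_pos _
  -- summability of F
  have hFnorm : ∀ p : ℕ × ℕ, ‖F p‖ ≤
      C * ((‖bc s p.1‖ * r ^ p.1) * (1 / |(p.2:ℝ) + a.re| ^ s.re)) := by
    rintro ⟨n, m⟩
    have hma := hz_add_ne_zero m ha
    have hMpos : (0:ℝ) < ‖(m:ℂ) + a‖ := norm_pos_iff.mpr hma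
    have hpos : (0:ℝ) < (m:ℝ) + a.re := by positivity
    have h1 : ‖((m:ℂ) + a) ^ (-(s + (n:ℂ)))‖ ≤ C * ‖(m:ℂ) + a‖ ^ (-(s.re + n)) := by
      have := norm_cpow_le m ha (s + (n:ℂ))
      simpa [Complex.add_re, Complex.add_im, Complex.natCast_re, Complex.natCast_im] using this
    have h2 : ‖(m:ℂ) + a‖ ^ (-(s.re + (n:ℝ)))
        = ‖(m:ℂ) + a‖ ^ (-s.re) * (‖(m:ℂ) + a‖ ^ n)⁻¹ := by
      rw [show -(s.re + (n:ℝ)) = -s.re + (-(n:ℝ)) by ring, Real.rpow_add hMpos]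
      congr 1
      rw [Real.rpow_neg hMpos.le, Real.rpow_natCast]
    have h3 : ‖a‖ ^ n * (‖(m:ℂ) + a‖ ^ n)⁻¹ ≤ 1 := by
      rw [mul_inv_le_iff₀ (by positivity), one_mul]
      exact pow_le_pow_left₀ (norm_nonneg a) (norm_le_norm_add m ha) n
    have h4 : ‖(m:ℂ) + a‖ ^ (-s.re) ≤ 1 / |(m:ℝ) + a.re| ^ s.re := by
      rw [abs_of_pos hpos, one_div, ← Real.rpow_neg hpos.le]
      apply Real.rpow_le_rpow_of_nonpos hpos _ (by linarith : -s.re ≤ 0)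
      calc (m:ℝ) + a.re = ((m:ℂ) + a).re := by simp [Complex.add_re, Complex.natCast_re]
        _ ≤ ‖(m:ℂ) + a‖ := Complex.re_le_norm _
    calc ‖F (n, m)‖ = ‖bc s n‖ * r ^ n * ‖a‖ ^ n * ‖((m:ℂ) + a) ^ (-(s + (n:ℂ)))‖ := by
          simp [hF, norm_mul, norm_pow, hr]
      _ ≤ ‖bc s n‖ * r ^ n * ‖a‖ ^ n * (C * ‖(m:ℂ) + a‖ ^ (-(s.re + n))) := by
          apply mul_le_mul_of_nonneg_left h1 (by positivity)
      _ = C * ((‖bc s n‖ * r ^ n) * ((‖a‖ ^ n * (‖(m:ℂ) + a‖ ^ n)⁻¹)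
            * ‖(m:ℂ) + a‖ ^ (-s.re))) := by rw [h2]; ring
      _ ≤ C * ((‖bc s n‖ * r ^ n) * (1 * (1 / |(m:ℝ) + a.re| ^ s.re))) := by
          apply mul_le_mul_of_nonneg_left _ hCpos.le
          apply mul_le_mul_of_nonneg_left _ (by positivity)
          apply mul_le_mul h3 h4 (Real.rpow_nonneg hMpos.le _) zero_le_one
      _ = C * ((‖bc s n‖ * r ^ n) * (1 / |(m:ℝ) + a.re| ^ s.re)) := by rw [one_mul]
  have hu : Summable (fun n : ℕ => ‖bc s n‖ * r ^ n) :=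
    bc_summable s (norm_nonneg _) hr1
  have hv : Summable (fun m : ℕ => 1 / |(m:ℝ) + a.re| ^ s.re) :=
    (Real.summable_one_div_nat_add_rpow a.re s.re).mpr hs
  have hbound : Summable (fun p : ℕ × ℕ =>
      C * ((‖bc s p.1‖ * r ^ p.1) * (1 / |(p.2:ℝ) + a.re| ^ s.re))) := by
    apply Summable.mul_left C
    exact hu.mul_of_nonneg hv (fun n => by positivity) (fun m => by positivity)
  have hFsum : Summable F := Summable.of_norm_bounded hbound hFnorm
  set S : ℂ := ∑' p, F p with hS
  have hFS : HasSum F S := hFsum.hasSum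
  -- columns: sum over n for fixed m
  have hcol : ∀ m : ℕ, HasSum (fun n => F (n, m)) (((m:ℂ) + k * a) ^ (-s)) :=
    fun m => hasSum_row s a ha hk0 hk2 m
  have hswap : HasSum (fun p : ℕ × ℕ => F (p.2, p.1)) S := by
    have := (Equiv.prodComm ℕ ℕ).hasSum_iff (f := F) (a := S)
    exact this.mpr hFS
  have hmS : HasSum (fun m : ℕ => ((m:ℂ) + k * a) ^ (-s)) S :=
    hswap.prod_fiberwise hcol
  have hzeta : hurwitzZeta' s (k * a) = S := by
    rw [hurwitzZeta']
    exact hmS.tsum_eq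
  -- rows
  have hrow : ∀ n : ℕ, HasSum (fun m => F (n, m))
      ((bc s n * (1 - (k:ℂ)) ^ n * a ^ n) * hurwitzZeta' (s + n) a) := by
    intro n
    have hts : 1 < (s + (n:ℂ)).re := by
      simp only [Complex.add_re, Complex.natCast_re]
      have : (0:ℝ) ≤ n := Nat.cast_nonneg n
      linarith
    have hterm : HasSum (fun m : ℕ => ((m:ℂ) + a) ^ (-(s + (n:ℂ))))
        (hurwitzZeta' (s + n) a) := (summable_term ha hts).hasSum
    have := hterm.mul_left (bc s n * (1 - (k:ℂ)) ^ n * a ^ n)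
    refine this.congr_fun fun m => ?_
    rw [hF]
  have hmain : HasSum (fun n : ℕ =>
      (bc s n * (1 - (k:ℂ)) ^ n * a ^ n) * hurwitzZeta' (s + n) a) S :=
    hFS.prod_fiberwise hrow
  rw [hzeta]
  refine hmain.congr_fun fun n => ?_
  rw [bc]
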